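/- arXiv:1402.3157 — 2 statements merged into one kernel-verified Lean document; each statement's English description precedes it below -/
import Mathlib

section
/- Let R be a left Noetherian ring satisfying property (◇). Then for every semi-Artinian left R-module M and every injective left R-module E containing M as an essential submodule, E is semi-Artinian. (That is, property (◇) implies that Dickson's torsion class, the class of semi-Artinian modules, is closed under injective hulls.) -/
universe u v w

/-- The socle of a module: the sum (supremum) of all simple submodules. -/
def moduleSocle (R : Type u) [Ring R] (M : Type v) [AddCommGroup M] [Module R M] :
    Submodule R M :=
  sSup {S : Submodule R M | IsSimpleModule R S}

/-- A submodule `N` of `M` is essential if `N ⊓ L ≠ ⊥` for every nonzero submodule `L` of `M`. -/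
def IsEssentialSubmodule {R : Type u} [Ring R] {M : Type v} [AddCommGroup M] [Module R M]
    (N : Submodule R M) : Prop :=
  ∀ L : Submodule R M, L ≠ ⊥ → N ⊓ L ≠ ⊥

/-- A module is semi-Artinian if every nonzero quotient has a nonzero socle. -/
def IsSemiartinianModule (R : Type u) [Ring R] (M : Type v) [AddCommGroup M] [Module R M] :
    Prop :=
  ∀ N : Submodule R M, N ≠ ⊤ → moduleSocle R (M ⧸ N) ≠ ⊥

/-- A module is singular if the annihilator of each of its elements is an essential left
ideal of `R`. -/
def IsSingularModule (R : Type u) [Ring R] (M : Type v) [AddCommGroup M] [Module R M] : Prop :=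
  ∀ m : M, IsEssentialSubmodule (LinearMap.ker (LinearMap.toSpanSingleton R M m))

/-- Property (◇): every finitely generated left `R`-module containing an essential simple
submodule is Artinian. -/
def HasPropertyDiamond (R : Type u) [Ring R] : Prop :=
  ∀ (M : Type v) [AddCommGroup M] [Module R M], Module.Finite R M →
    (∃ S : Submodule R M, IsSimpleModule R S ∧ IsEssentialSubmodule S) → IsArtinian R M

/-- A left C-ring: every nonzero cyclic singular left module has a nonzero socle. -/
def IsLeftCRing (R : Type u) [Ring R] : Prop :=
  ∀ (M : Type v) [AddCommGroup M] [Module R M], Nontrivial M →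
    (∃ m : M, Submodule.span R {m} = ⊤) → IsSingularModule R M →
    moduleSocle R M ≠ ⊥

/-- The Dickson torsion part of a module: the sum of all its semi-Artinian submodules. -/
def dicksonTorsionPart (R : Type u) [Ring R] (A : Type v) [AddCommGroup A] [Module R A] :
    Submodule R A :=
  sSup {N : Submodule R A | IsSemiartinianModule R N}

section Aux

variable {R : Type u} [Ring R]

theorem aux_socle_ne_bot_iff {M : Type v} [AddCommGroup M] [Module R M] :
    moduleSocle R M ≠ ⊥ ↔ ∃ S : Submodule R M, IsSimpleModule R S := by
  constructor
  · intro hs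
    by_contra hn
    push_neg at hn
    have he : {S : Submodule R M | IsSimpleModule R S} = ∅ := by
      ext S; simpa using hn S
    rw [moduleSocle, he, sSup_empty] at hs
    exact hs rfl
  · rintro ⟨S, hS⟩
    have h1 : S ≤ moduleSocle R M := le_sSup hS
    have h2 : S ≠ ⊥ := (isSimpleModule_iff_isAtom.mp hS).1
    exact fun hbot => h2 (le_bot_iff.mp (hbot ▸ h1))

theorem aux_simple_map {M : Type v} {N : Type w} [AddCommGroup M] [Module R M] [AddCommGroup N]
    [Module R N] (f : M →ₗ[R] N) (hf : Function.Injective f) (S : Submodule R M)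
    (hS : IsSimpleModule R S) : IsSimpleModule R (S.map f) := by
  haveI := hS
  exact IsSimpleModule.congr (S.equivMapOfInjective f hf).symm

theorem aux_simple_comap_of_le_range {M : Type v} {N : Type w} [AddCommGroup M] [Module R M]
    [AddCommGroup N] [Module R N] (f : M →ₗ[R] N) (hf : Function.Injective f)
    (S : Submodule R N) (hS : IsSimpleModule R S) (hle : S ≤ LinearMap.range f) :
    IsSimpleModule R (S.comap f) := by
  haveI := hS
  have hmc : (S.comap f).map f = S := by
    rw [Submodule.map_comap_eq]
    exact inf_eq_right.mpr hle
  exact IsSimpleModule.congr (((S.comap f).equivMapOfInjective f hf).trans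
    (LinearEquiv.ofEq _ _ hmc))

theorem aux_exists_maximal_compl {M : Type v} [AddCommGroup M] [Module R M]
    (T S : Submodule R M) (hTS : T ⊓ S = ⊥) :
    ∃ N : Submodule R M, T ≤ N ∧ N ⊓ S = ⊥ ∧ ∀ P : Submodule R M, N < P → P ⊓ S ≠ ⊥ := by
  have hz : ∀ c ⊆ {N : Submodule R M | N ⊓ S = ⊥}, IsChain (· ≤ ·) c → ∀ y ∈ c,
      ∃ ub ∈ {N : Submodule R M | N ⊓ S = ⊥}, ∀ z ∈ c, z ≤ ub := by
    intro c hcs hchain y hy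
    refine ⟨sSup c, ?_, fun z hz => le_sSup hz⟩
    rw [Set.mem_setOf_eq, eq_bot_iff]
    intro x hx
    obtain ⟨hx1, hx2⟩ := Submodule.mem_inf.mp hx
    obtain ⟨N', hN'c, hxN'⟩ := (Submodule.mem_sSup_of_directed ⟨y, hy⟩ hchain.directedOn).mp hx1
    have hmem : x ∈ N' ⊓ S := Submodule.mem_inf.mpr ⟨hxN', hx2⟩
    rw [hcs hN'c] at hmem
    exact hmem
  obtain ⟨N, hTN, hN⟩ := zorn_le_nonempty₀ {N : Submodule R M | N ⊓ S = ⊥} hz T hTS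
  exact ⟨N, hTN, hN.1, fun P hNP hPS => hNP.ne (le_antisymm hNP.le (hN.2 hPS hNP.le))⟩

theorem aux_map_mkQ_eq_bot_iff {M : Type v} [AddCommGroup M] [Module R M]
    (N P : Submodule R M) : P.map N.mkQ = ⊥ ↔ P ≤ N := by
  rw [eq_bot_iff, Submodule.map_le_iff_le_comap, Submodule.comap_bot, Submodule.ker_mkQ]

/-- If `N` is maximal with `N ⊓ L = ⊥`, then the image of `L` in `M ⧸ N` is essential. -/
theorem aux_essential_quotient {M : Type v} [AddCommGroup M] [Module R M]
    {N L : Submodule R M} (hNL : N ⊓ L = ⊥)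
    (hNmax : ∀ P : Submodule R M, N < P → P ⊓ L ≠ ⊥) :
    IsEssentialSubmodule (L.map N.mkQ) := by
  intro Q hQ
  set Q' := Q.comap N.mkQ with hQ'
  have hNQ' : N < Q' := by
    refine lt_of_le_of_ne (N.le_comap_mkQ Q) fun he => hQ ?_
    rw [← Submodule.map_comap_eq_of_surjective N.mkQ_surjective Q, ← hQ', ← he,
      Submodule.mkQ_map_self]
  have h1 : Q' ⊓ L ≠ ⊥ := hNmax Q' hNQ'
  have h2 : (Q' ⊓ L).map N.mkQ ≠ ⊥ := by
    rw [Ne, aux_map_mkQ_eq_bot_iff]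
    intro hle
    exact h1 (le_bot_iff.mp (hNL ▸ le_inf hle inf_le_right))
  have h3 : (Q' ⊓ L).map N.mkQ ≤ L.map N.mkQ ⊓ Q := by
    refine le_inf (Submodule.map_mono inf_le_right) ?_
    refine (Submodule.map_mono inf_le_left).trans ?_
    rw [Submodule.map_comap_eq_of_surjective N.mkQ_surjective]
  exact fun hb => h2 (le_bot_iff.mp (hb ▸ h3))

end Aux

section Aux2

variable {R : Type u} [Ring R]

/-- In a semi-Artinian module, every nonzero submodule contains a simple submodule. -/
theorem aux_exists_simple_le_semiartinian {A : Type v} [AddCommGroup A] [Module R A]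
    (hA : IsSemiartinianModule R A) (L : Submodule R A) (hL : L ≠ ⊥) :
    ∃ S : Submodule R A, S ≤ L ∧ IsSimpleModule R S := by
  obtain ⟨N, -, hNL, hNmax⟩ := aux_exists_maximal_compl (⊥ : Submodule R A) L (by simp)
  have hNtop : N ≠ ⊤ := by
    rintro rfl
    rw [top_inf_eq] at hNL
    exact hL hNL
  obtain ⟨S0, hS0⟩ := aux_socle_ne_bot_iff.mp (hA N hNtop)
  have hatom := isSimpleModule_iff_isAtom.mp hS0
  have hess := aux_essential_quotient hNL hNmax
  have hS0le : S0 ≤ L.map N.mkQ := by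
    have := hess S0 hatom.1
    rw [inf_comm] at this
    rcases hatom.le_iff.mp inf_le_left with hh | hh
    · rw [hh] at this; exact absurd rfl this
    · exact inf_eq_left.mp hh
  -- φ : L → A ⧸ N, injective, with range = L.map N.mkQ
  set φ : L →ₗ[R] A ⧸ N := N.mkQ.comp L.subtype with hφdef
  have hker : LinearMap.ker φ = ⊥ := by
    rw [hφdef, LinearMap.ker_comp, Submodule.ker_mkQ]
    apply Submodule.map_injective_of_injective L.injective_subtype
    rw [Submodule.map_comap_subtype, Submodule.map_bot, inf_comm, hNL]
  have hinj : Function.Injective φ := LinearMap.ker_eq_bot.mp hker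
  have hrange : LinearMap.range φ = L.map N.mkQ := by
    rw [hφdef, LinearMap.range_comp, Submodule.range_subtype]
  have hsimple : IsSimpleModule R (S0.comap φ) :=
    aux_simple_comap_of_le_range φ hinj S0 hS0 (hrange ▸ hS0le)
  refine ⟨(S0.comap φ).map L.subtype, Submodule.map_subtype_le _ _,
    aux_simple_map _ L.injective_subtype _ hsimple⟩

end Aux2

section Aux3

variable {R : Type u} [Ring R]

theorem aux_artinian_of_bot_essential {X : Type v} [AddCommGroup X] [Module R X]
    (hess : IsEssentialSubmodule (⊥ : Submodule R X)) : IsArtinian R X := by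
  have hsub : Subsingleton X := by
    refine subsingleton_of_forall_eq 0 fun x => ?_
    by_contra hx
    have hspan : Submodule.span R {x} ≠ ⊥ := by
      simpa [Submodule.span_singleton_eq_bot] using hx
    exact hess _ hspan (by simp)
  exact isArtinian_of_finite

theorem aux_simple_map_mkQ {X : Type v} [AddCommGroup X] [Module R X]
    {N S : Submodule R X} (hNS : N ⊓ S = ⊥) (hS : IsSimpleModule R S) :
    IsSimpleModule R (S.map N.mkQ) := by
  set φ : S →ₗ[R] X ⧸ N := N.mkQ.comp S.subtype with hφdef
  have hker : LinearMap.ker φ = ⊥ := by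
    rw [hφdef, LinearMap.ker_comp, Submodule.ker_mkQ]
    apply Submodule.map_injective_of_injective S.injective_subtype
    rw [Submodule.map_comap_subtype, Submodule.map_bot]
    rwa [inf_comm] at hNS
  have hrange : LinearMap.range φ = S.map N.mkQ := by
    rw [hφdef, LinearMap.range_comp, Submodule.range_subtype]
  haveI := hS
  exact IsSimpleModule.congr ((LinearEquiv.ofEq _ _ hrange.symm).trans
    (LinearEquiv.ofInjective φ (LinearMap.ker_eq_bot.mp hker)).symm)

/-- Key induction: a finitely generated module with an essential finite sup of simple
submodules is Artinian, given (◇). -/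
theorem aux_artinian_of_finset (R : Type u) [Ring R] [IsNoetherianRing R]
    (h : HasPropertyDiamond.{u, v} R) (k : ℕ) :
    ∀ (X : Type v) [AddCommGroup X] [Module R X], Module.Finite R X →
    ∀ t : Finset (Submodule R X), t.card ≤ k → (∀ S ∈ t, IsSimpleModule R S) →
    IsEssentialSubmodule (t.sup id) → IsArtinian R X := by
  classical
  induction k with
  | zero =>
    intro X _ _ _ t ht _ hess
    rw [Finset.card_eq_zero.mp (Nat.le_zero.mp ht), Finset.sup_empty] at hess
    exact aux_artinian_of_bot_essential hess
  | succ k IH =>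
    intro X _ _ hfin t ht hsimp hess
    rcases t.eq_empty_or_nonempty with rfl | ⟨S0, hS0t⟩
    · rw [Finset.sup_empty] at hess
      exact aux_artinian_of_bot_essential hess
    set t' := t.erase S0 with ht'def
    set T' : Submodule R X := t'.sup id with hT'def
    have htins : t = insert S0 t' := (Finset.insert_erase hS0t).symm
    have hsup : t.sup id = S0 ⊔ T' := by
      conv_lhs => rw [htins]
      rw [Finset.sup_insert]
      rfl
    have ht'card : t'.card ≤ k := by
      rw [ht'def, Finset.card_erase_of_mem hS0t]
      omega
    have hS0 : IsSimpleModule R S0 := hsimp S0 hS0t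
    have hatom := isSimpleModule_iff_isAtom.mp hS0
    by_cases hle : S0 ≤ T'
    · have heq : t.sup id = T' := by rw [hsup, sup_eq_right.mpr hle]
      rw [heq] at hess
      exact IH X hfin t' ht'card (fun S hS => hsimp S (Finset.mem_of_mem_erase hS)) hess
    · have hdisj : S0 ⊓ T' = ⊥ := by
        rcases hatom.le_iff.mp (inf_le_left : S0 ⊓ T' ≤ S0) with hh | hh
        · exact hh
        · exact absurd (inf_eq_left.mp hh) hle
      obtain ⟨N, hT'N, hNS0, hNmax⟩ := aux_exists_maximal_compl T' S0 (by rwa [inf_comm] at hdisj)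
      -- X ⧸ N is Artinian by (◇)
      have hq : IsArtinian R (X ⧸ N) := by
        refine h (X ⧸ N) inferInstance ⟨S0.map N.mkQ, aux_simple_map_mkQ hNS0 hS0, ?_⟩
        exact aux_essential_quotient hNS0 hNmax
      -- N is Artinian by IH
      haveI : IsNoetherian R X := isNoetherian_of_isNoetherianRing_of_finite R X
      haveI : Module.Finite R N := Module.Finite.iff_fg.mpr (IsNoetherian.noetherian N)
      have hPle : ∀ P ∈ t', P ≤ N := fun P hP =>
        (Finset.le_sup (f := id) hP : id P ≤ T').trans hT'N
      have hn : IsArtinian R N := by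
        refine IH N ‹_› (t'.image (Submodule.comap N.subtype))
          (Finset.card_image_le.trans ht'card) ?_ ?_
        · rintro S hS
          obtain ⟨P, hP, rfl⟩ := Finset.mem_image.mp hS
          haveI := hsimp P (Finset.mem_of_mem_erase hP)
          exact IsSimpleModule.congr (Submodule.comapSubtypeEquivOfLe (hPle P hP))
        · have hmapsup : Submodule.map N.subtype
              ((t'.image (Submodule.comap N.subtype)).sup id) = T' := by
            rw [Finset.sup_image, hT'def, Finset.sup_eq_iSup, Finset.sup_eq_iSup,
              Submodule.map_iSup]
            refine iSup_congr fun P => ?_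
            rw [Submodule.map_iSup]
            refine iSup_congr fun hP => ?_
            show Submodule.map N.subtype (Submodule.comap N.subtype P) = id P
            rw [Submodule.map_comap_subtype, inf_eq_right.mpr (hPle P hP)]
            rfl
          have hS0N : S0 ⊓ N = ⊥ := (inf_comm S0 N).trans hNS0
          have hTN' : (t.sup id) ⊓ N = T' := by
            rw [hsup, sup_comm S0 T', sup_inf_assoc_of_le S0 hT'N, hS0N, sup_bot_eq]
          intro L' hL'
          have hLne : Submodule.map N.subtype L' ≠ ⊥ := by
            intro hb
            apply hL'
            apply Submodule.map_injective_of_injective N.injective_subtype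
            rw [hb, Submodule.map_bot]
          have h1 := hess _ hLne
          have hLN : Submodule.map N.subtype L' ≤ N := Submodule.map_subtype_le _ _
          have h2 : (t.sup id) ⊓ Submodule.map N.subtype L'
              = T' ⊓ Submodule.map N.subtype L' := by
            conv_lhs => rw [← inf_eq_right.mpr hLN, ← inf_assoc, hTN']
          have h3 : Submodule.map N.subtype
              (((t'.image (Submodule.comap N.subtype)).sup id) ⊓ L')
              = T' ⊓ Submodule.map N.subtype L' := by
            rw [Submodule.map_inf N.subtype N.injective_subtype, hmapsup]
          intro hb
          rw [hb, Submodule.map_bot] at h3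
          exact h1 (h2.trans h3.symm)
      exact isArtinian_of_range_eq_ker N.subtype N.mkQ
        (by rw [Submodule.range_subtype, Submodule.ker_mkQ])

end Aux3

section Main

variable {R : Type u} [Ring R] [IsNoetherianRing R]

theorem aux_span_artinian (h : HasPropertyDiamond.{u, v} R)
    {E : Type v} [AddCommGroup E] [Module R E] (M : Submodule R E)
    (hM : IsSemiartinianModule R M) (hMe : IsEssentialSubmodule M) (x : E) :
    IsArtinian R (Submodule.span R ({x} : Set E)) := by
  classical
  set X := Submodule.span R ({x} : Set E) with hX
  haveI hfin : Module.Finite R X := Module.Finite.iff_fg.mpr (Submodule.fg_span_singleton x)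
  haveI : IsNoetherian R X := isNoetherian_of_isNoetherianRing_of_finite R X
  have hsoc : ∀ L' : Submodule R X, L' ≠ ⊥ →
      ∃ S' : Submodule R X, S' ≤ L' ∧ IsSimpleModule R S' := by
    intro L' hL'
    have hLne : Submodule.map X.subtype L' ≠ ⊥ := by
      intro hb
      apply hL'
      apply Submodule.map_injective_of_injective X.injective_subtype
      rw [hb, Submodule.map_bot]
    have hML : M ⊓ Submodule.map X.subtype L' ≠ ⊥ := hMe _ hLne
    set K' : Submodule R M := Submodule.comap M.subtype (M ⊓ Submodule.map X.subtype L')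
      with hK'
    have hK'ne : K' ≠ ⊥ := by
      intro hb
      apply hML
      have h0 := congrArg (Submodule.map M.subtype) hb
      rw [hK', Submodule.map_comap_subtype, ← inf_assoc, inf_idem, Submodule.map_bot] at h0
      exact h0
    obtain ⟨S', hS'le, hS's⟩ := aux_exists_simple_le_semiartinian hM K' hK'ne
    set S : Submodule R E := Submodule.map M.subtype S' with hSdef
    have hSs : IsSimpleModule R S := aux_simple_map _ M.injective_subtype _ hS's
    have hSle : S ≤ M ⊓ Submodule.map X.subtype L' := by
      rw [hSdef]
      refine (Submodule.map_mono hS'le).trans ?_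
      rw [hK', Submodule.map_comap_subtype, ← inf_assoc, inf_idem]
    have hSX : S ≤ X := (hSle.trans inf_le_right).trans (Submodule.map_subtype_le _ _)
    refine ⟨Submodule.comap X.subtype S, ?_, ?_⟩
    · refine (Submodule.comap_mono (hSle.trans inf_le_right)).trans ?_
      rw [Submodule.comap_map_eq, Submodule.ker_subtype, sup_bot_eq]
    · haveI := hSs
      exact IsSimpleModule.congr (Submodule.comapSubtypeEquivOfLe hSX)
  set 𝒮 := {S : Submodule R X | IsSimpleModule R S} with h𝒮
  set W := sSup 𝒮 with hW
  obtain ⟨t, hts, htW⟩ := (CompleteLattice.isCompactElement_iff_exists_le_sSup_of_le_sSup (k := W)).mp ((Submodule.fg_iff_compact W).mp (IsNoetherian.noetherian W)) 𝒮 le_rfl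
  refine aux_artinian_of_finset R h t.card X hfin t le_rfl (fun S hS => hts hS) ?_
  intro L' hL'
  obtain ⟨S', hS'L, hS's⟩ := hsoc L' hL'
  have hS'W : S' ≤ t.sup id := le_trans (le_trans (le_sSup hS's) le_rfl) htW
  have hS'ne : S' ≠ ⊥ := (isSimpleModule_iff_isAtom.mp hS's).1
  exact fun hb => hS'ne (le_bot_iff.mp (hb ▸ le_inf hS'W hS'L))

theorem stmt3' (h : HasPropertyDiamond.{u, v} R)
    (E : Type v) [AddCommGroup E] [Module R E]
    (M : Submodule R E) (hM : IsSemiartinianModule R M) (hMe : IsEssentialSubmodule M) :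
    IsSemiartinianModule R E := by
  intro N hN
  refine aux_socle_ne_bot_iff.mpr ?_
  have hx : ∃ x : E, x ∉ N := by
    by_contra hc
    push_neg at hc
    exact hN (Submodule.eq_top_iff'.mpr hc)
  obtain ⟨x, hxN⟩ := hx
  haveI hart : IsArtinian R (Submodule.span R ({x} : Set E)) := aux_span_artinian h M hM hMe x
  set X := Submodule.span R ({x} : Set E) with hX
  set φ : X →ₗ[R] E ⧸ N := N.mkQ.comp X.subtype with hφ
  haveI : IsArtinian R (LinearMap.range φ) :=
    isArtinian_of_surjective X φ.rangeRestrict φ.surjective_rangeRestrict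
  have hWne : LinearMap.range φ ≠ ⊥ := by
    intro hb
    have hxX : x ∈ X := Submodule.mem_span_singleton_self x
    have h0 : φ ⟨x, hxX⟩ ∈ LinearMap.range φ := LinearMap.mem_range_self φ _
    rw [hb, Submodule.mem_bot] at h0
    have h1 : N.mkQ x = 0 := h0
    rw [Submodule.mkQ_apply] at h1
    exact hxN ((Submodule.Quotient.mk_eq_zero N).mp h1)
  haveI : Nontrivial (LinearMap.range φ) := Submodule.nontrivial_iff_ne_bot.mpr hWne
  haveI : IsAtomic (Submodule R (LinearMap.range φ)) :=
    isAtomic_of_orderBot_wellFounded_lt wellFounded_lt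
  have htb : (⊤ : Submodule R (LinearMap.range φ)) ≠ ⊥ := by
    intro hb
    obtain ⟨a, b, hab⟩ := ‹Nontrivial (LinearMap.range φ)›
    apply hab
    have ha : a ∈ (⊥ : Submodule R (LinearMap.range φ)) := hb ▸ Submodule.mem_top
    have hbb : b ∈ (⊥ : Submodule R (LinearMap.range φ)) := hb ▸ Submodule.mem_top
    rw [Submodule.mem_bot] at ha hbb
    rw [ha, hbb]
  obtain ⟨A, hA, -⟩ :=
    (IsAtomic.eq_bot_or_exists_atom_le (⊤ : Submodule R (LinearMap.range φ))).resolve_left htb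
  have hAs : IsSimpleModule R A := isSimpleModule_iff_isAtom.mpr hA
  exact ⟨A.map (LinearMap.range φ).subtype,
    aux_simple_map _ (Submodule.injective_subtype _) A hAs⟩

end Main


/-- Over a left Noetherian ring with property (◇), an injective module containing a
semi-Artinian essential submodule is itself semi-Artinian. -/
theorem stmt3 (R : Type u) [Ring R] [IsNoetherianRing R] (h : HasPropertyDiamond.{u, v} R)
    (E : Type v) [AddCommGroup E] [Module R E] [Module.Injective R E]
    (M : Submodule R E) (hM : IsSemiartinianModule R M) (hMe : IsEssentialSubmodule M) :
    IsSemiartinianModule R E := by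
  exact stmt3' h E M hM hMe
end

section
/- Let R be a left Noetherian domain (a nontrivial ring without zero divisors) such that every nonzero cyclic singular left R-module has a nonzero socle. Then every nonzero prime two-sided ideal P of R is a maximal two-sided ideal; indeed R/P is a simple Artinian ring. -/
universe u v w

section Aux
open Submodule
variable {R : Type u} [Ring R]

lemma exists_simple_of_socle_ne_bot {M : Type v} [AddCommGroup M] [Module R M]
    (h : moduleSocle R M ≠ ⊥) : ∃ S : Submodule R M, IsSimpleModule R S := by
  by_contra hc
  push_neg at hc
  refine h ?_
  have he : {S : Submodule R M | IsSimpleModule R S} = ∅ := by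
    ext S; simp only [Set.mem_setOf_eq, Set.mem_empty_iff_false, iff_false]; exact hc S
  rw [moduleSocle, he, sSup_empty]

lemma IsEssentialSubmodule.mono {M : Type v} [AddCommGroup M] [Module R M]
    {N N' : Submodule R M} (h : IsEssentialSubmodule N) (hle : N ≤ N') :
    IsEssentialSubmodule N' := fun L hL hbot =>
  h L hL (eq_bot_mono (inf_le_inf_right L hle) hbot)

/-- image of socle under a linear map lands in the socle. -/
lemma map_socle_le {M : Type v} {M' : Type w} [AddCommGroup M] [Module R M]
    [AddCommGroup M'] [Module R M'] (f : M →ₗ[R] M') :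
    (moduleSocle R M).map f ≤ moduleSocle R M' := by
  rw [moduleSocle, sSup_eq_iSup]
  rw [Submodule.map_iSup]
  refine iSup_le fun S => ?_
  rw [Submodule.map_iSup]
  refine iSup_le fun hS => ?_
  haveI : IsSimpleModule R S := hS
  set g : S →ₗ[R] M' := f.comp S.subtype with hg
  have hrange : S.map f = LinearMap.range g := by
    rw [hg, LinearMap.range_comp, Submodule.range_subtype]
  rw [hrange]
  rcases eq_bot_or_eq_top (LinearMap.ker g) with hk | hk
  · have hinj : Function.Injective g := LinearMap.ker_eq_bot.mp hk
    have : IsSimpleModule R (LinearMap.range g) :=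
      IsSimpleModule.congr (LinearEquiv.ofInjective g hinj).symm
    exact le_sSup this
  · have : g = 0 := by
      ext x
      have : (x : S) ∈ LinearMap.ker g := hk ▸ Submodule.mem_top
      simpa using this
    rw [this, LinearMap.range_zero]
    exact bot_le

lemma isArtinian_of_isSimpleModule {M : Type v} [AddCommGroup M] [Module R M]
    (h : IsSimpleModule R M) : IsArtinian R M := by
  constructor
  have hacc : Acc (· < ·) (⊥ : Submodule R M) := Acc.intro _ fun y hy => absurd hy (by simp)
  constructor
  intro N
  rcases eq_bot_or_eq_top N with rfl | rfl
  · exact hacc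
  · exact Acc.intro _ fun y hy => by
      rcases eq_bot_or_eq_top y with rfl | rfl
      · exact hacc
      · exact absurd hy (lt_irrefl _)

/-- comap of a coatom is top or a coatom. -/
lemma comap_coatom {M : Type v} {M' : Type w} [AddCommGroup M] [Module R M]
    [AddCommGroup M'] [Module R M'] (f : M →ₗ[R] M') {m : Submodule R M'}
    (hm : IsCoatom m) : Submodule.comap f m = ⊤ ∨ IsCoatom (Submodule.comap f m) := by
  haveI : IsSimpleModule R (M' ⧸ m) := isSimpleModule_iff_isCoatom.mpr hm
  set g : M →ₗ[R] M' ⧸ m := m.mkQ.comp f with hgdef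
  have hker : LinearMap.ker g = Submodule.comap f m := by
    ext x
    simp [hgdef, Submodule.Quotient.mk_eq_zero]
  rcases eq_bot_or_eq_top (LinearMap.range g) with h | h
  · left
    rw [← hker]
    exact LinearMap.ker_eq_top.mpr (LinearMap.range_eq_bot.mp h)
  · right
    rw [← hker]
    rw [← isSimpleModule_iff_isCoatom]
    exact IsSimpleModule.congr
      ((g.quotKerEquivRange).trans ((LinearEquiv.ofEq _ _ h).trans (Submodule.topEquiv)))

end Aux

section A2
variable {R : Type u} [Ring R]

lemma exists_quot_equiv {I : Ideal R} (N : Submodule R (R ⧸ I)) (hN : N ≠ ⊤) :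
    ∃ J : Ideal R, I ≤ J ∧ J ≠ ⊤ ∧ Nonempty ((((R ⧸ I) ⧸ N)) ≃ₗ[R] (R ⧸ J)) := by
  have hle : I ≤ Submodule.comap I.mkQ N := by
    intro x hx
    simp only [Submodule.mem_comap, Submodule.mkQ_apply]
    rw [(Submodule.Quotient.mk_eq_zero I).mpr hx]
    exact N.zero_mem
  have hmap : (Submodule.comap I.mkQ N).map I.mkQ = N := by
    rw [Submodule.map_comap_eq, Submodule.range_mkQ, top_inf_eq]
  refine ⟨Submodule.comap I.mkQ N, hle, ?_, ⟨?_⟩⟩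
  · intro h
    apply hN
    rw [← hmap, h, Submodule.map_top, Submodule.range_mkQ]
  · exact (Submodule.quotEquivOfEq N _ hmap.symm).trans
      (Submodule.quotientQuotientEquivQuotient I (Submodule.comap I.mkQ N) hle)

variable (P : TwoSidedIdeal R)

lemma asIdeal_mem (x : R) : x ∈ TwoSidedIdeal.asIdeal P ↔ x ∈ P := TwoSidedIdeal.mem_asIdeal

lemma TwoSidedIdeal.exists_ne_zero (h : P ≠ ⊥) : ∃ p ∈ P, p ≠ (0 : R) := by
  by_contra hc
  push_neg at hc
  refine h ?_
  ext x
  rw [TwoSidedIdeal.mem_bot]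
  exact ⟨fun hx => hc x hx, fun hx => hx ▸ P.zero_mem⟩
end A2


section Main
variable {R : Type u} [Ring R] [IsDomain R] (P : TwoSidedIdeal R)

lemma pIdeal_essential (hP0 : P ≠ ⊥) :
    IsEssentialSubmodule (TwoSidedIdeal.asIdeal P) := by
  intro L hL hbot
  obtain ⟨p, hp, hp0⟩ := TwoSidedIdeal.exists_ne_zero P hP0
  obtain ⟨l, hl, hl0⟩ := Submodule.ne_bot_iff L |>.mp hL
  have hmem : p * l ∈ TwoSidedIdeal.asIdeal P ⊓ L := by
    refine ⟨(asIdeal_mem P _).mpr (P.mul_mem_right p l hp), ?_⟩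
    simpa [smul_eq_mul] using L.smul_mem p hl
  rw [hbot, Submodule.mem_bot] at hmem
  exact mul_ne_zero hp0 hl0 hmem

/-- Any quotient of `R` by a left ideal containing `P` has nonzero socle. -/
lemma socle_quot_ne_bot (hC : IsLeftCRing.{u, u} R) (hP0 : P ≠ ⊥)
    {I : Ideal R} (hPI : TwoSidedIdeal.asIdeal P ≤ I) (hI : I ≠ ⊤) :
    moduleSocle R (R ⧸ I) ≠ ⊥ := by
  refine hC (R ⧸ I) (Submodule.Quotient.nontrivial_iff.mpr hI) ?_ ?_
  · refine ⟨Submodule.Quotient.mk 1, ?_⟩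
    rw [eq_top_iff]
    rintro x -
    obtain ⟨r, rfl⟩ := Submodule.Quotient.mk_surjective I x
    have : (Submodule.Quotient.mk r : R ⧸ I) = r • (Submodule.Quotient.mk 1 : R ⧸ I) := by
      rw [← Submodule.Quotient.mk_smul, smul_eq_mul, mul_one]
    rw [this]
    exact Submodule.smul_mem _ r (Submodule.mem_span_singleton_self _)
  · intro m
    refine (pIdeal_essential P hP0).mono ?_
    intro p hp
    obtain ⟨r, rfl⟩ := Submodule.Quotient.mk_surjective I m
    simp only [LinearMap.mem_ker, LinearMap.toSpanSingleton_apply]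
    rw [← Submodule.Quotient.mk_smul, smul_eq_mul]
    exact (Submodule.Quotient.mk_eq_zero I).mpr (hPI ((asIdeal_mem P _).mpr
      (P.mul_mem_right _ _ ((asIdeal_mem P _).mp hp))))

end Main

section Main2
variable {R : Type u} [Ring R] [IsDomain R] [IsNoetherianRing R] (P : TwoSidedIdeal R)

lemma quot_isArtinian (hC : IsLeftCRing.{u, u} R) (hP0 : P ≠ ⊥) :
    IsArtinian R (R ⧸ TwoSidedIdeal.asIdeal P) := by
  set P' : Ideal R := TwoSidedIdeal.asIdeal P with hP'
  haveI hNoeth : IsNoetherian R (R ⧸ P') := inferInstance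
  obtain ⟨N₀, hN₀mem, hmax⟩ := set_has_maximal_iff_noetherian.mpr hNoeth
      {N : Submodule R (R ⧸ P') | IsArtinian R N} ⟨⊥, isArtinian_of_le (bot_le (a := (⊥ : Submodule R (R ⧸ P'))))⟩
  by_cases hN₀ : N₀ = ⊤
  · rw [hN₀] at hN₀mem
    haveI : IsArtinian R (⊤ : Submodule R (R ⧸ P')) := hN₀mem
    exact isArtinian_of_linearEquiv (Submodule.topEquiv)
  · exfalso
    obtain ⟨J, hPJ, hJtop, ⟨e⟩⟩ := exists_quot_equiv N₀ hN₀
    have hsoc := socle_quot_ne_bot P hC hP0 hPJ hJtop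
    obtain ⟨S, hS⟩ := exists_simple_of_socle_ne_bot hsoc
    haveI := hS
    set T : Submodule R ((R ⧸ P') ⧸ N₀) :=
      S.map (e.symm : (R ⧸ J) →ₗ[R] ((R ⧸ P') ⧸ N₀)) with hT
    haveI hTsimple : IsSimpleModule R T := IsSimpleModule.congr (e.symm.submoduleMap S).symm
    have hTne : T ≠ ⊥ := (isSimpleModule_iff_isAtom.mp hTsimple).1
    set N' : Submodule R (R ⧸ P') := Submodule.comap N₀.mkQ T with hN'
    have hle : N₀ ≤ N' := by
      intro x hx
      simp only [hN', Submodule.mem_comap, Submodule.mkQ_apply]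
      rw [(Submodule.Quotient.mk_eq_zero N₀).mpr hx]
      exact T.zero_mem
    have hlt : N₀ < N' := by
      refine lt_of_le_of_ne hle fun h => hTne ?_
      have : T = Submodule.map N₀.mkQ N' := by
        rw [hN', Submodule.map_comap_eq, Submodule.range_mkQ, top_inf_eq]
      rw [this, ← h, Submodule.mkQ_map_self]
    haveI : IsArtinian R N₀ := hN₀mem
    haveI : IsArtinian R T := isArtinian_of_isSimpleModule hTsimple
    set f : N₀ →ₗ[R] N' := Submodule.inclusion hle with hf
    set g : N' →ₗ[R] T :=
      LinearMap.codRestrict T (N₀.mkQ.comp N'.subtype) (fun x => x.2) with hg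
    have hrk : LinearMap.range f = LinearMap.ker g := by
      ext x
      constructor
      · rintro ⟨y, rfl⟩
        rw [LinearMap.mem_ker]
        apply Subtype.ext
        show (N₀.mkQ.comp N'.subtype) (f y) = 0
        simp only [LinearMap.comp_apply, Submodule.subtype_apply, Submodule.mkQ_apply]
        exact (Submodule.Quotient.mk_eq_zero N₀).mpr y.2
      · intro hx
        have hx0 : N₀.mkQ (x : R ⧸ P') = 0 := by
          have := congrArg (Subtype.val) (LinearMap.mem_ker.mp hx)
          exact this
        have hmem : (x : R ⧸ P') ∈ N₀ := by
          rwa [Submodule.mkQ_apply, Submodule.Quotient.mk_eq_zero] at hx0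
        exact ⟨⟨x, hmem⟩, Subtype.ext rfl⟩
    haveI : IsArtinian R N' := isArtinian_of_range_eq_ker f g hrk
    exact hmax N' ‹IsArtinian R N'› hlt

end Main2

section Main3
variable {R : Type u} [Ring R]

lemma isSemisimple_of_isSimple {M : Type v} [AddCommGroup M] [Module R M]
    [IsSimpleModule R M] : IsSemisimpleModule R M :=
  IsSemisimpleModule.of_sSup_simples_eq_top (top_unique (le_sSup
    (show IsSimpleModule R (⊤ : Submodule R M) from
      IsSimpleModule.congr Submodule.topEquiv)))

lemma map_mkQ_isCoatom {M : Type v} [AddCommGroup M] [Module R M] (p : Submodule R M)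
    {I : Submodule R M} (hpI : p ≤ I) (hI : IsCoatom I) :
    IsCoatom (Submodule.map p.mkQ I) := by
  have hmc : ∀ b : Submodule R (M ⧸ p), Submodule.map p.mkQ (Submodule.comap p.mkQ b) = b := by
    intro b
    rw [Submodule.map_comap_eq, Submodule.range_mkQ, top_inf_eq]
  constructor
  · rw [Ne, Submodule.map_mkQ_eq_top, sup_eq_right.mpr hpI]
    exact hI.1
  · intro b hb
    have hIb : I ≤ Submodule.comap p.mkQ b := Submodule.map_le_iff_le_comap.mp hb.le
    rcases eq_or_lt_of_le hIb with heq | hlt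
    · exact absurd (by rw [← hmc b, ← heq]) hb.ne'
    · rw [← hmc b, hI.2 _ hlt, Submodule.map_top, Submodule.range_mkQ]
end Main3

section Main4
variable {R : Type u} [Ring R] [IsDomain R] [IsNoetherianRing R] (P : TwoSidedIdeal R)

lemma quot_isSemisimple (hC : IsLeftCRing.{u, u} R) (hP0 : P ≠ ⊥) (hPtop : P ≠ ⊤)
    (hPprime : ∀ A B : TwoSidedIdeal R, (∀ a ∈ A, ∀ b ∈ B, a * b ∈ P) → A ≤ P ∨ B ≤ P) :
    IsSemisimpleModule R (R ⧸ TwoSidedIdeal.asIdeal P) := by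
  classical
  set P' : Ideal R := TwoSidedIdeal.asIdeal P with hP'def
  set Mq := R ⧸ P' with hMq
  have hP'top : P' ≠ ⊤ := by
    intro h
    have h1 : (1 : R) ∈ P' := by rw [h]; exact Submodule.mem_top
    exact hPtop (TwoSidedIdeal.eq_top P ((asIdeal_mem P 1).mp h1))
  have hkill : ∀ p ∈ P, ∀ x : Mq, p • x = 0 := by
    intro p hp x
    obtain ⟨r, rfl⟩ := Submodule.Quotient.mk_surjective P' x
    rw [← Submodule.Quotient.mk_smul, smul_eq_mul]
    exact (Submodule.Quotient.mk_eq_zero P').mpr ((asIdeal_mem P _).mpr (P.mul_mem_right _ _ hp))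
  -- right multiplication maps
  have hrk : ∀ c : R, P' ≤ LinearMap.ker ((P'.mkQ).comp (LinearMap.toSpanSingleton R R c)) := by
    intro c p hp
    simp only [LinearMap.mem_ker, LinearMap.comp_apply, LinearMap.toSpanSingleton_apply,
      Submodule.mkQ_apply, smul_eq_mul]
    exact (Submodule.Quotient.mk_eq_zero P').mpr ((asIdeal_mem P _).mpr
      (P.mul_mem_right _ _ ((asIdeal_mem P _).mp hp)))
  set ρ : R → (Mq →ₗ[R] Mq) :=
    fun c => Submodule.liftQ P' ((P'.mkQ).comp (LinearMap.toSpanSingleton R R c)) (hrk c)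
    with hρdef
  have hρ : ∀ c r : R, ρ c (Submodule.Quotient.mk r) = Submodule.Quotient.mk (r * c) := by
    intro c r
    show Submodule.liftQ P' ((P'.mkQ).comp (LinearMap.toSpanSingleton R R c)) (hrk c)
      (Submodule.Quotient.mk r) = Submodule.Quotient.mk (r * c)
    rw [Submodule.liftQ_apply]
    simp [smul_eq_mul]
  set socM := moduleSocle R Mq with hsocdef
  have hsoc : socM ≠ ⊥ := socle_quot_ne_bot P hC hP0 (le_refl P') hP'top
  have hsocinv : ∀ c : R, Submodule.map (ρ c) socM ≤ socM := fun c => map_socle_le (ρ c)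
  -- the socle, pulled back to a two-sided ideal
  set Atwo : TwoSidedIdeal R := TwoSidedIdeal.mk'
    {r : R | (Submodule.Quotient.mk r : Mq) ∈ socM}
    (by simp only [Set.mem_setOf_eq, Submodule.Quotient.mk_zero]; exact socM.zero_mem)
    (fun {x y} hx hy => by
      simp only [Set.mem_setOf_eq] at *
      rw [Submodule.Quotient.mk_add]; exact socM.add_mem hx hy)
    (fun {x} hx => by
      simp only [Set.mem_setOf_eq] at *
      rw [Submodule.Quotient.mk_neg]; exact socM.neg_mem hx)
    (fun {x y} hy => by
      simp only [Set.mem_setOf_eq] at *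
      have : (Submodule.Quotient.mk (x * y) : Mq) = x • (Submodule.Quotient.mk y : Mq) := by
        rw [← Submodule.Quotient.mk_smul, smul_eq_mul]
      rw [this]; exact socM.smul_mem x hy)
    (fun {x y} hx => by
      simp only [Set.mem_setOf_eq] at *
      rw [← hρ y x]
      exact hsocinv y (Submodule.mem_map_of_mem hx)) with hAdef
  -- the radical
  set radM : Submodule R Mq := sInf {m : Submodule R Mq | IsCoatom m} with hraddef
  have hradinv : ∀ c : R, Submodule.map (ρ c) radM ≤ radM := by
    intro c
    refine le_sInf fun m hm => Submodule.map_le_iff_le_comap.mpr ?_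
    rcases comap_coatom (ρ c) hm with h | h
    · rw [h]; exact le_top
    · exact sInf_le h
  set Jtwo : TwoSidedIdeal R := TwoSidedIdeal.mk'
    {r : R | (Submodule.Quotient.mk r : Mq) ∈ radM}
    (by simp only [Set.mem_setOf_eq, Submodule.Quotient.mk_zero]; exact radM.zero_mem)
    (fun {x y} hx hy => by
      simp only [Set.mem_setOf_eq] at *
      rw [Submodule.Quotient.mk_add]; exact radM.add_mem hx hy)
    (fun {x} hx => by
      simp only [Set.mem_setOf_eq] at *
      rw [Submodule.Quotient.mk_neg]; exact radM.neg_mem hx)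
    (fun {x y} hy => by
      simp only [Set.mem_setOf_eq] at *
      have : (Submodule.Quotient.mk (x * y) : Mq) = x • (Submodule.Quotient.mk y : Mq) := by
        rw [← Submodule.Quotient.mk_smul, smul_eq_mul]
      rw [this]; exact radM.smul_mem x hy)
    (fun {x y} hx => by
      simp only [Set.mem_setOf_eq] at *
      rw [← hρ y x]
      exact hradinv y (Submodule.mem_map_of_mem hx)) with hJdef
  -- elements of the radical annihilate every simple submodule of Mq
  have hann : ∀ (T : Submodule R Mq), IsSimpleModule R T →
      ∀ x ∈ T, ∀ a : R, (Submodule.Quotient.mk a : Mq) ∈ radM → a • x = 0 := by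
    intro T hT x hx a ha
    by_cases hx0 : x = 0
    · rw [hx0, smul_zero]
    set φ := LinearMap.toSpanSingleton R Mq x with hφdef
    have hrange : LinearMap.range φ = T := by
      rw [← LinearMap.span_singleton_eq_range]
      haveI := hT
      have hatom := isSimpleModule_iff_isAtom.mp hT
      have h1 : Submodule.span R {x} ≤ T := by
        rw [Submodule.span_le, Set.singleton_subset_iff]; exact hx
      rcases eq_or_lt_of_le h1 with heq | hlt
      · exact heq
      · exact absurd (hatom.2 _ hlt) fun h => hx0 (Submodule.span_singleton_eq_bot.mp h)
    have hker : IsCoatom (LinearMap.ker φ) := by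
      rw [← isSimpleModule_iff_isCoatom]
      haveI := hT
      exact IsSimpleModule.congr ((φ.quotKerEquivRange).trans (LinearEquiv.ofEq _ _ hrange))
    have hPker : P' ≤ LinearMap.ker φ := by
      intro p hp
      simp only [LinearMap.mem_ker, hφdef, LinearMap.toSpanSingleton_apply]
      exact hkill p ((asIdeal_mem P p).mp hp) x
    have hcoatom : IsCoatom (Submodule.map P'.mkQ (LinearMap.ker φ)) :=
      map_mkQ_isCoatom P' hPker hker
    have hle : radM ≤ Submodule.map P'.mkQ (LinearMap.ker φ) := sInf_le hcoatom
    obtain ⟨b, hb, hba⟩ := hle ha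
    have hsub : b - a ∈ P' := (Submodule.Quotient.eq P').mp hba
    have : a ∈ LinearMap.ker φ := by
      have : a = b - (b - a) := (sub_sub_cancel b a).symm
      rw [this]
      exact Submodule.sub_mem _ hb (hPker hsub)
    simpa [hφdef, LinearMap.toSpanSingleton_apply] using LinearMap.mem_ker.mp this
  -- radM = ⊥
  have hradbot : radM = ⊥ := by
    set Z : Submodule R Mq :=
      { carrier := {x : Mq | ∀ a : R, (Submodule.Quotient.mk a : Mq) ∈ radM → a • x = 0}
        add_mem' := fun {x y} hx hy a ha => by rw [smul_add, hx a ha, hy a ha, add_zero]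
        zero_mem' := fun a _ => smul_zero a
        smul_mem' := fun r x hx a ha => by
          rw [← mul_smul]
          refine hx (a * r) ?_
          have : (Submodule.Quotient.mk (a * r) : Mq) = ρ r (Submodule.Quotient.mk a) :=
            (hρ r a).symm
          rw [this]
          exact hradinv r (Submodule.mem_map_of_mem ha) } with hZdef
    have hsocZ : socM ≤ Z := by
      rw [hsocdef, moduleSocle]
      refine sSup_le fun T hT => ?_
      intro x hx a ha
      exact hann T hT x hx a ha
    rcases hPprime Jtwo Atwo (fun a ha b hb => by
      rw [TwoSidedIdeal.mem_mk'] at ha hb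
      have h1 : (Submodule.Quotient.mk (a * b) : Mq) = a • (Submodule.Quotient.mk b : Mq) := by
        rw [← Submodule.Quotient.mk_smul, smul_eq_mul]
      have h2 : a • (Submodule.Quotient.mk b : Mq) = 0 := hsocZ hb a ha
      rw [← asIdeal_mem, ← Submodule.Quotient.mk_eq_zero P', h1, h2]) with hJP | hAP
    · rw [eq_bot_iff]
      intro x hx
      obtain ⟨r, rfl⟩ := Submodule.Quotient.mk_surjective P' x
      have hr : r ∈ Jtwo := by rw [TwoSidedIdeal.mem_mk']; exact hx
      rw [Submodule.mem_bot, Submodule.Quotient.mk_eq_zero P']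
      exact (asIdeal_mem P r).mpr (hJP hr)
    · exfalso
      obtain ⟨x, hxmem, hx0⟩ := Submodule.ne_bot_iff socM |>.mp hsoc
      obtain ⟨r, rfl⟩ := Submodule.Quotient.mk_surjective P' x
      have hr : r ∈ Atwo := by rw [TwoSidedIdeal.mem_mk']; exact hxmem
      exact hx0 ((Submodule.Quotient.mk_eq_zero P').mpr ((asIdeal_mem P r).mpr (hAP hr)))
  -- ⊥ is a finite intersection of coatoms
  haveI hart : IsArtinian R Mq := quot_isArtinian P hC hP0
  obtain ⟨N₁, ⟨s, hs, hN₁⟩, hmin⟩ := IsArtinian.set_has_minimal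
    {N : Submodule R Mq | ∃ t : Finset (Submodule R Mq), (∀ m ∈ t, IsCoatom m) ∧ N = t.inf id}
    ⟨⊤, ∅, by simp, by simp⟩
  have hN₁bot : N₁ = ⊥ := by
    rw [← le_bot_iff, ← hradbot, hraddef]
    refine le_sInf fun m hm => ?_
    have hmem : N₁ ⊓ m ∈ {N : Submodule R Mq |
        ∃ t : Finset (Submodule R Mq), (∀ m ∈ t, IsCoatom m) ∧ N = t.inf id} := by
      refine ⟨insert m s, ?_, ?_⟩
      · intro m' hm'
        rcases Finset.mem_insert.mp hm' with rfl | hm'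
        · exact hm
        · exact hs m' hm'
      · rw [Finset.inf_insert, ← hN₁, id_eq, inf_comm]
    have := hmin _ hmem
    have hle : N₁ ⊓ m ≤ N₁ := inf_le_left
    have heq : N₁ ⊓ m = N₁ := by
      rcases eq_or_lt_of_le hle with h | h
      · exact h
      · exact absurd h this
    exact inf_eq_left.mp heq
  -- build the embedding into a finite product of simple modules
  haveI hsimp : ∀ i : {x // x ∈ s}, IsSimpleModule R (Mq ⧸ (i : Submodule R Mq)) :=
    fun i => isSimpleModule_iff_isCoatom.mpr (hs i i.2)
  haveI hss : ∀ i : {x // x ∈ s}, IsSemisimpleModule R (Mq ⧸ (i : Submodule R Mq)) :=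
    fun i => isSemisimple_of_isSimple
  set f : Mq →ₗ[R] ((i : {x // x ∈ s}) → Mq ⧸ (i : Submodule R Mq)) :=
    LinearMap.pi (fun i => ((i : Submodule R Mq)).mkQ) with hfdef
  have hfker : LinearMap.ker f = ⊥ := by
    rw [← hN₁bot, hN₁]
    ext x
    simp only [LinearMap.mem_ker, hfdef, Submodule.mem_finsetInf, id]
    rw [funext_iff]
    constructor
    · intro h m hm
      have := h ⟨m, hm⟩
      simpa [Submodule.Quotient.mk_eq_zero] using this
    · intro h i
      simp only [LinearMap.pi_apply, Submodule.mkQ_apply, Pi.zero_apply]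
      exact (Submodule.Quotient.mk_eq_zero _).mpr (h _ i.2)
  haveI hpi : IsSemisimpleModule R ((i : {x // x ∈ s}) → Mq ⧸ (i : Submodule R Mq)) := by
    have hsup := LinearMap.iSup_range_single (R := R)
      (φ := fun i : {x // x ∈ s} => Mq ⧸ (i : Submodule R Mq))
    refine isSemisimpleModule_of_isSemisimpleModule_submodule' (fun i => ?_) hsup
    have hinj : Function.Injective
        (LinearMap.single R (fun i : {x // x ∈ s} => Mq ⧸ (i : Submodule R Mq)) i) :=
      LinearMap.ker_eq_bot.mp (LinearMap.ker_single R _ i)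
    exact IsSemisimpleModule.congr (LinearEquiv.ofInjective _ hinj).symm
  exact IsSemisimpleModule.of_injective f (LinearMap.ker_eq_bot.mp hfker)

end Main4

/-- Over a left Noetherian C-domain, every nonzero prime two-sided ideal is a maximal
two-sided ideal, and the quotient is a simple Artinian ring. -/
theorem stmt18 (R : Type u) [Ring R] [IsDomain R] [IsNoetherianRing R]
    (hC : IsLeftCRing.{u, u} R)
    (P : TwoSidedIdeal R) (hP0 : P ≠ ⊥) (hPtop : P ≠ ⊤)
    (hPprime : ∀ A B : TwoSidedIdeal R, (∀ a ∈ A, ∀ b ∈ B, a * b ∈ P) → A ≤ P ∨ B ≤ P) :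
    IsCoatom P ∧ IsSimpleRing P.ringCon.Quotient ∧ IsArtinianRing P.ringCon.Quotient := by
  classical
  set P' : Ideal R := TwoSidedIdeal.asIdeal P with hP'def
  set Mq := R ⧸ P' with hMqdef
  set π : R →+* P.ringCon.Quotient := P.ringCon.mk' with hπdef
  have hπs : Function.Surjective π := fun q => Quotient.inductionOn' q fun r => ⟨r, rfl⟩
  have hπ0 : ∀ r : R, π r = 0 ↔ r ∈ P := by
    intro r
    rw [show π r = ((r : R) : P.ringCon.Quotient) from rfl,
      show (0 : P.ringCon.Quotient) = (((0 : R) : P.ringCon.Quotient)) from rfl,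
      RingCon.eq, TwoSidedIdeal.rel_iff, sub_zero]
  haveI hss : IsSemisimpleModule R Mq := quot_isSemisimple P hC hP0 hPtop hPprime
  haveI hart : IsArtinian R Mq := quot_isArtinian P hC hP0
  -- P is a coatom
  have hcoP : IsCoatom P := by
    refine ⟨hPtop, ?_⟩
    intro B hB
    set Bbar : Submodule R Mq := Submodule.map P'.mkQ (TwoSidedIdeal.asIdeal B) with hBbar
    obtain ⟨C, hCc⟩ := exists_isCompl Bbar
    set T : TwoSidedIdeal R := TwoSidedIdeal.mk' {t : R | ∀ b ∈ B, b * t ∈ P}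
      (fun b _ => by rw [mul_zero]; exact P.zero_mem)
      (fun {x y} hx hy b hb => by rw [mul_add]; exact P.add_mem (hx b hb) (hy b hb))
      (fun {x} hx b hb => by rw [mul_neg]; exact P.neg_mem (hx b hb))
      (fun {x y} hy b hb => by
        rw [show b * (x * y) = (b * x) * y by rw [mul_assoc]]
        exact hy (b * x) (B.mul_mem_right b x hb))
      (fun {x y} hx b hb => by
        rw [show b * (x * y) = (b * x) * y by rw [mul_assoc]]
        exact P.mul_mem_right _ y (hx b hb)) with hTdef
    rcases hPprime B T (fun a ha t ht => (TwoSidedIdeal.mem_mk' _ _ _ _ _ _ t).mp ht a ha)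
      with hBP | hTP
    · exact absurd hBP (not_le_of_gt hB)
    · have hCbot : C = ⊥ := by
        rw [eq_bot_iff]
        intro x hx
        obtain ⟨c, rfl⟩ := Submodule.Quotient.mk_surjective P' x
        have hcT : c ∈ T := by
          rw [TwoSidedIdeal.mem_mk']
          intro b hb
          have h1 : (Submodule.Quotient.mk (b * c) : Mq) ∈ Bbar :=
            Submodule.mem_map_of_mem ((asIdeal_mem B _).mpr (B.mul_mem_right b c hb))
          have hsm : (Submodule.Quotient.mk (b * c) : Mq)
              = b • (Submodule.Quotient.mk c : Mq) := by
            rw [← Submodule.Quotient.mk_smul, smul_eq_mul]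
          have h2 : (Submodule.Quotient.mk (b * c) : Mq) ∈ C := by
            rw [hsm]; exact C.smul_mem b hx
          have h3 : (Submodule.Quotient.mk (b * c) : Mq) ∈ Bbar ⊓ C := ⟨h1, h2⟩
          rw [hCc.inf_eq_bot, Submodule.mem_bot, Submodule.Quotient.mk_eq_zero] at h3
          exact (asIdeal_mem P _).mp h3
        have hcP : c ∈ P := hTP hcT
        rw [Submodule.mem_bot, Submodule.Quotient.mk_eq_zero]
        exact (asIdeal_mem P c).mpr hcP
      have hBtop : Bbar = ⊤ := by
        have := hCc.sup_eq_top
        rw [hCbot, sup_bot_eq] at this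
        exact this
      have h1 : (Submodule.Quotient.mk 1 : Mq) ∈ Bbar := hBtop ▸ Submodule.mem_top
      obtain ⟨b, hb, hb1⟩ := h1
      have hb' : b ∈ B := (asIdeal_mem B b).mp hb
      have hsub : b - 1 ∈ P' := by
        rw [← Submodule.Quotient.eq P']
        exact hb1
      have h1b : (1 : R) - b ∈ P := by
        have := P.neg_mem ((asIdeal_mem P _).mp hsub)
        simpa using this
      have h2 := B.add_mem hb' (hB.le h1b)
      have h3 : (1 : R) ∈ B := by simpa using h2
      exact TwoSidedIdeal.eq_top B h3
  -- the quotient ring is nontrivial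
  haveI hQnt : Nontrivial P.ringCon.Quotient := by
    refine ⟨⟨(1 : P.ringCon.Quotient), 0, fun h => hPtop ?_⟩⟩
    have h1 : π 1 = 0 := by rw [map_one]; exact h
    exact TwoSidedIdeal.eq_top P ((hπ0 1).mp h1)
  -- simple ring
  have hsimple : IsSimpleRing P.ringCon.Quotient := by
    constructor
    constructor
    intro I
    set Icomap : TwoSidedIdeal R := TwoSidedIdeal.mk' {r : R | π r ∈ I}
      (by simp only [Set.mem_setOf_eq, map_zero]; exact I.zero_mem)
      (fun {x y} hx hy => by
        simp only [Set.mem_setOf_eq, map_add] at *; exact I.add_mem hx hy)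
      (fun {x} hx => by
        simp only [Set.mem_setOf_eq, map_neg] at *; exact I.neg_mem hx)
      (fun {x y} hy => by
        simp only [Set.mem_setOf_eq, map_mul] at *; exact I.mul_mem_left _ _ hy)
      (fun {x y} hx => by
        simp only [Set.mem_setOf_eq, map_mul] at *; exact I.mul_mem_right _ _ hx) with hIdef
    have hPle : P ≤ Icomap := by
      intro r hr
      rw [TwoSidedIdeal.mem_mk']
      show π r ∈ I
      rw [(hπ0 r).mpr hr]
      exact I.zero_mem
    by_cases hle : Icomap ≤ P
    · left
      ext x
      rw [TwoSidedIdeal.mem_bot]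
      constructor
      · intro hx
        obtain ⟨r, rfl⟩ := hπs x
        have hr : r ∈ Icomap := by rw [TwoSidedIdeal.mem_mk']; exact hx
        exact (hπ0 r).mpr (hle hr)
      · rintro rfl; exact I.zero_mem
    · right
      have htop : Icomap = ⊤ := hcoP.2 _ (lt_of_le_not_ge hPle hle)
      have h1 : (1 : R) ∈ Icomap := htop ▸ TwoSidedIdeal.mem_top R
      rw [TwoSidedIdeal.mem_mk'] at h1
      have : π 1 ∈ I := h1
      rw [map_one] at this
      exact TwoSidedIdeal.eq_top I this
  -- Artinian ring
  have hartQ : IsArtinianRing P.ringCon.Quotient := by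
    have hker : ∀ J : Ideal P.ringCon.Quotient, P' ≤ Ideal.comap π J := by
      intro J p hp
      simp only [Ideal.mem_comap]
      rw [(hπ0 p).mpr ((asIdeal_mem P p).mp hp)]
      exact J.zero_mem
    have hcm : ∀ J : Ideal P.ringCon.Quotient,
        Submodule.comap P'.mkQ (Submodule.map P'.mkQ (Ideal.comap π J)) = Ideal.comap π J := by
      intro J
      rw [Submodule.comap_map_mkQ, sup_eq_right.mpr (hker J)]
    have hmono : StrictMono (fun J : Ideal P.ringCon.Quotient =>
        Submodule.map P'.mkQ (Ideal.comap π J)) := by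
      intro J₁ J₂ hJ
      have hcomap : Ideal.comap π J₁ < Ideal.comap π J₂ :=
        (Ideal.orderEmbeddingOfSurjective π hπs).strictMono hJ
      refine lt_of_le_of_ne (Submodule.map_mono hcomap.le) fun h => hcomap.ne ?_
      simp only at h
      rw [← hcm J₁, ← hcm J₂, h]
    exact hmono.wellFoundedLT
  exact ⟨hcoP, hsimple, hartQ⟩
end
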